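/- Let A = k[u_1,…,u_n, v_1^2,…,v_n^2] ⊆ C = k[u_1,…,u_n,v_1,…,v_n] over k = ℤ/2, and let s be the derivation with s(u_i)=0, s(v_i)=u_i. Then ker(s) = im(s) + A as A-submodules of C. -/

import Mathlib

open MvPolynomial

/-- The derivation `s = Σ uᵢ ∂/∂vᵢ` on `C = (ℤ/2)[u₁,…,uₙ,v₁,…,vₙ]`,
determined by `s(uᵢ) = 0` and `s(vᵢ) = uᵢ`.  Here the variable `Sum.inl i`
is `uᵢ` and `Sum.inr i` is `vᵢ`. -/
noncomputable def sDer (n : ℕ) :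
    Derivation (ZMod 2) (MvPolynomial (Fin n ⊕ Fin n) (ZMod 2))
      (MvPolynomial (Fin n ⊕ Fin n) (ZMod 2)) :=
  MvPolynomial.mkDerivation (ZMod 2)
    (Sum.elim (fun _ => 0) (fun i => X (Sum.inl i)))


/-- The subring `A = k[u₁,…,uₙ,v₁²,…,vₙ²]` of `C`. -/
noncomputable def Asub (n : ℕ) : Subalgebra (ZMod 2) (MvPolynomial (Fin n ⊕ Fin n) (ZMod 2)) :=
  Algebra.adjoin (ZMod 2)
    (Set.range (fun i : Fin n => X (Sum.inl i)) ∪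
      Set.range (fun i : Fin n => (X (Sum.inr i) : MvPolynomial (Fin n ⊕ Fin n) (ZMod 2)) ^ 2))

namespace Stmt3Aux

open Finsupp

noncomputable section

variable {n : ℕ}

local notation "C2" => MvPolynomial (Fin n ⊕ Fin n) (ZMod 2)

lemma addself (x : MvPolynomial (Fin n ⊕ Fin n) (ZMod 2)) : x + x = 0 := by
  rw [← two_smul (ZMod 2) x, show (2 : ZMod 2) = 0 by decide, zero_smul]

lemma castEven {e : ℕ} (h : Even e) : (e : ZMod 2) = 0 := by
  obtain ⟨k, rfl⟩ := h
  push_cast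
  rw [← two_mul, show (2 : ZMod 2) = 0 by decide, zero_mul]

lemma castOdd {e : ℕ} (h : ¬ Even e) : (e : ZMod 2) = 1 := by
  rw [Nat.not_even_iff_odd] at h
  obtain ⟨k, rfl⟩ := h
  push_cast
  rw [show (2 : ZMod 2) = 0 by decide, zero_mul, zero_add]

/-- exponent of `uᵢ` -/
def uE (i : Fin n) : (Fin n ⊕ Fin n) →₀ ℕ := Finsupp.single (Sum.inl i) 1

/-- exponent of `vᵢ` -/
def vE (i : Fin n) : (Fin n ⊕ Fin n) →₀ ℕ := Finsupp.single (Sum.inr i) 1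

/-- the condition under which the contracting homotopy acts on a monomial:
`i` is the least index with `uᵢ` occurring, and all `vⱼ`, `j ≤ i`, occur to even powers. -/
def hcond (d : (Fin n ⊕ Fin n) →₀ ℕ) (i : Fin n) : Prop :=
  d (Sum.inl i) ≠ 0 ∧ (∀ j < i, d (Sum.inl j) = 0) ∧ ∀ j ≤ i, Even (d (Sum.inr j))

/-- a monomial lies in `k[v²]` -/
def pcond (d : (Fin n ⊕ Fin n) →₀ ℕ) : Prop :=
  (∀ j, d (Sum.inl j) = 0) ∧ ∀ j, Even (d (Sum.inr j))

open scoped Classical in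
/-- value of the contracting homotopy on a monomial -/
def Hmono (d : (Fin n ⊕ Fin n) →₀ ℕ) : MvPolynomial (Fin n ⊕ Fin n) (ZMod 2) :=
  ∑ i : Fin n, if hcond d i then monomial (d - uE i + vE i) 1 else 0

open scoped Classical in
/-- value of the projection onto `k[v²]` on a monomial -/
def Pmono (d : (Fin n ⊕ Fin n) →₀ ℕ) : MvPolynomial (Fin n ⊕ Fin n) (ZMod 2) :=
  if pcond d then monomial d 1 else 0

/-- the contracting homotopy, as a linear map -/
def Hmap (n : ℕ) :
    MvPolynomial (Fin n ⊕ Fin n) (ZMod 2) →ₗ[ZMod 2] MvPolynomial (Fin n ⊕ Fin n) (ZMod 2) :=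
  (basisMonomials (Fin n ⊕ Fin n) (ZMod 2)).constr (ZMod 2) Hmono

/-- the projection onto `k[v²]`, as a linear map -/
def Pmap (n : ℕ) :
    MvPolynomial (Fin n ⊕ Fin n) (ZMod 2) →ₗ[ZMod 2] MvPolynomial (Fin n ⊕ Fin n) (ZMod 2) :=
  (basisMonomials (Fin n ⊕ Fin n) (ZMod 2)).constr (ZMod 2) Pmono

lemma Hmap_monomial (d : (Fin n ⊕ Fin n) →₀ ℕ) :
    Hmap n (monomial d 1) = Hmono d := by
  have := (basisMonomials (Fin n ⊕ Fin n) (ZMod 2)).constr_basis (ZMod 2) Hmono d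
  rwa [coe_basisMonomials] at this

lemma Pmap_monomial (d : (Fin n ⊕ Fin n) →₀ ℕ) :
    Pmap n (monomial d 1) = Pmono d := by
  have := (basisMonomials (Fin n ⊕ Fin n) (ZMod 2)).constr_basis (ZMod 2) Pmono d
  rwa [coe_basisMonomials] at this

lemma sDer_monomial (d : (Fin n ⊕ Fin n) →₀ ℕ) :
    sDer n (monomial d 1) =
      ∑ j : Fin n, (d (Sum.inr j) : ZMod 2) • monomial (d - vE j + uE j) 1 := by
  rw [show sDer n = MvPolynomial.mkDerivation (ZMod 2)
      (Sum.elim (fun _ => 0) (fun i => X (Sum.inl i))) from rfl,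
    mkDerivation_monomial, one_smul]
  rw [Finsupp.sum_fintype _ _ (fun i => by simp), Fintype.sum_sum_type]
  simp only [Sum.elim_inl, Sum.elim_inr, smul_zero, Finset.sum_const_zero, zero_add]
  refine Finset.sum_congr rfl fun j _ => ?_
  rw [smul_eq_mul, X, monomial_mul, mul_one, smul_monomial, smul_eq_mul, mul_one]
  rfl

lemma Hmono_eq_of {d : (Fin n ⊕ Fin n) →₀ ℕ} {i : Fin n} (h : hcond d i) :
    Hmono d = monomial (d - uE i + vE i) 1 := by
  classical
  rw [Hmono, Finset.sum_eq_single i]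
  · simp [h]
  · intro j _ hji
    rw [if_neg]
    intro hj
    rcases lt_trichotomy j i with hlt | heq | hgt
    · exact hj.1 (h.2.1 j hlt)
    · exact hji heq
    · exact h.1 (hj.2.1 i hgt)
  · intro hi; exact absurd (Finset.mem_univ i) hi

lemma Hmono_eq_zero {d : (Fin n ⊕ Fin n) →₀ ℕ} (h : ∀ i, ¬ hcond d i) :
    Hmono d = 0 := by
  classical
  rw [Hmono]
  refine Finset.sum_eq_zero fun i _ => ?_
  rw [if_neg (h i)]


lemma uv_apply_inl (d : (Fin n ⊕ Fin n) →₀ ℕ) (i j : Fin n) :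
    (d - uE i + vE i) (Sum.inl j) = d (Sum.inl j) - (if i = j then 1 else 0) := by
  simp [uE, vE, Finsupp.tsub_apply, Finsupp.single_apply]

lemma uv_apply_inr (d : (Fin n ⊕ Fin n) →₀ ℕ) (i j : Fin n) :
    (d - uE i + vE i) (Sum.inr j) = d (Sum.inr j) + (if i = j then 1 else 0) := by
  simp [uE, vE, Finsupp.tsub_apply, Finsupp.single_apply]

lemma vu_apply_inl (d : (Fin n ⊕ Fin n) →₀ ℕ) (i j : Fin n) :
    (d - vE i + uE i) (Sum.inl j) = d (Sum.inl j) + (if i = j then 1 else 0) := by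
  simp [uE, vE, Finsupp.tsub_apply, Finsupp.single_apply]

lemma vu_apply_inr (d : (Fin n ⊕ Fin n) →₀ ℕ) (i j : Fin n) :
    (d - vE i + uE i) (Sum.inr j) = d (Sum.inr j) - (if i = j then 1 else 0) := by
  simp [uE, vE, Finsupp.tsub_apply, Finsupp.single_apply]

lemma L1 {d : (Fin n ⊕ Fin n) →₀ ℕ} {i j : Fin n} (hne : i ≠ j) :
    d - vE j + uE j - uE i + vE i = d - uE i + vE i - vE j + uE j := by
  ext x
  rcases x with x | x
  · rw [uv_apply_inl (d - vE j + uE j), vu_apply_inl, vu_apply_inl (d - uE i + vE i),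
      uv_apply_inl]
    by_cases h1 : i = x <;> by_cases h2 : j = x <;> simp [h1, h2] <;> omega
  · rw [uv_apply_inr (d - vE j + uE j), vu_apply_inr, vu_apply_inr (d - uE i + vE i),
      uv_apply_inr]
    by_cases h1 : i = x <;> by_cases h2 : j = x <;> simp [h1, h2] <;> omega

lemma L2 {d : (Fin n ⊕ Fin n) →₀ ℕ} {i : Fin n} (h : d (Sum.inl i) ≠ 0) :
    d - uE i + vE i - vE i + uE i = d := by
  ext x
  rcases x with x | x
  · rw [vu_apply_inl (d - uE i + vE i), uv_apply_inl]
    by_cases h1 : i = x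
    · subst h1
      split_ifs with h2
      · omega
      · exact absurd rfl h2
    · simp [h1]
  · rw [vu_apply_inr (d - uE i + vE i), uv_apply_inr]
    by_cases h1 : i = x
    · simp only [if_pos h1]; omega
    · simp [h1]

lemma L3 {d : (Fin n ⊕ Fin n) →₀ ℕ} {i : Fin n} (h : d (Sum.inr i) ≠ 0) :
    d - vE i + uE i - uE i + vE i = d := by
  ext x
  rcases x with x | x
  · rw [uv_apply_inl (d - vE i + uE i), vu_apply_inl]
    by_cases h1 : i = x
    · simp only [if_pos h1]; omega
    · simp [h1]
  · rw [uv_apply_inr (d - vE i + uE i), vu_apply_inr]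
    by_cases h1 : i = x
    · subst h1
      split_ifs with h2
      · omega
      · exact absurd rfl h2
    · simp [h1]

lemma key (d : (Fin n ⊕ Fin n) →₀ ℕ) :
    sDer n (Hmap n (monomial d 1)) + Hmap n (sDer n (monomial d 1)) +
      Pmap n (monomial d 1) = monomial d 1 := by
  classical
  rw [Hmap_monomial, Pmap_monomial, sDer_monomial, map_sum]
  simp only [map_smul, Hmap_monomial]
  by_cases hP : pcond d
  · rw [Pmono, if_pos hP, Hmono_eq_zero (fun i hi => hi.1 (hP.1 i)), map_zero, zero_add]
    have hz : ∀ j : Fin n, (d (Sum.inr j) : ZMod 2) • Hmono (d - vE j + uE j) = 0 := fun j => by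
      rw [castEven (hP.2 j), zero_smul]
    rw [Finset.sum_congr rfl (fun j _ => hz j), Finset.sum_const_zero, zero_add]
  · rw [Pmono, if_neg hP, add_zero]
    have hFne : (Finset.univ.filter
        (fun i => d (Sum.inl i) ≠ 0 ∨ ¬ Even (d (Sum.inr i)))).Nonempty := by
      rw [pcond, not_and_or] at hP
      rcases hP with h | h <;> push_neg at h <;> obtain ⟨j, hj⟩ := h
      · exact ⟨j, Finset.mem_filter.mpr ⟨Finset.mem_univ j, Or.inl hj⟩⟩
      · exact ⟨j, Finset.mem_filter.mpr ⟨Finset.mem_univ j, Or.inr hj⟩⟩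
    obtain ⟨i₀, hi₀mem, hi₀min⟩ :
        ∃ i₀ ∈ Finset.univ.filter
          (fun i => d (Sum.inl i) ≠ 0 ∨ ¬ Even (d (Sum.inr i))),
          ∀ j ∈ Finset.univ.filter
            (fun i => d (Sum.inl i) ≠ 0 ∨ ¬ Even (d (Sum.inr i))), i₀ ≤ j :=
      ⟨_, Finset.min'_mem _ hFne, fun j hj => Finset.min'_le _ j hj⟩
    have hmem : d (Sum.inl i₀) ≠ 0 ∨ ¬ Even (d (Sum.inr i₀)) :=
      (Finset.mem_filter.mp hi₀mem).2
    have hjmem : ∀ j, (d (Sum.inl j) ≠ 0 ∨ ¬ Even (d (Sum.inr j))) → i₀ ≤ j := fun j h =>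
      hi₀min j (Finset.mem_filter.mpr ⟨Finset.mem_univ j, h⟩)
    have hmin : ∀ j, j < i₀ → d (Sum.inl j) = 0 ∧ Even (d (Sum.inr j)) := by
      intro j hj
      by_contra hc
      rw [not_and_or] at hc
      refine absurd (hjmem j ?_) (not_le.mpr hj)
      rcases hc with h | h
      · exact Or.inl h
      · exact Or.inr h
    by_cases hS : Even (d (Sum.inr i₀))
    · -- the minimal index carries a `u`
      have ha : d (Sum.inl i₀) ≠ 0 := by
        rcases hmem with h | h
        · exact h
        · exact absurd hS h
      have heven : ∀ j ≤ i₀, Even (d (Sum.inr j)) := by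
        intro j hj
        rcases eq_or_lt_of_le hj with rfl | h
        · exact hS
        · exact (hmin j h).2
      have hc0 : hcond d i₀ := ⟨ha, fun j hj => (hmin j hj).1, heven⟩
      rw [Hmono_eq_of hc0, sDer_monomial, ← Finset.sum_add_distrib]
      have hterm : ∀ j : Fin n,
          (((d - uE i₀ + vE i₀) (Sum.inr j) : ZMod 2)) •
              monomial (d - uE i₀ + vE i₀ - vE j + uE j) 1 +
            (d (Sum.inr j) : ZMod 2) • Hmono (d - vE j + uE j) =
          if j = i₀ then monomial d 1 else 0 := by
        intro j
        by_cases hj : j = i₀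
        · subst hj
          rw [if_pos rfl, uv_apply_inr, if_pos rfl, castEven hS, zero_smul, add_zero]
          have hodd : ¬ Even (d (Sum.inr j) + 1) := by
            rw [Nat.even_add_one]
            exact fun h => h hS
          rw [castOdd hodd, one_smul, L2 ha]
        · rw [if_neg hj, uv_apply_inr, if_neg (Ne.symm hj), add_zero]
          by_cases hE : Even (d (Sum.inr j))
          · rw [castEven hE, zero_smul, zero_smul, add_zero]
          · have hlt : i₀ < j :=
              lt_of_le_of_ne (hjmem j (Or.inr hE)) (Ne.symm hj)
            have hc' : hcond (d - vE j + uE j) i₀ := by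
              refine ⟨?_, ?_, ?_⟩
              · rw [vu_apply_inl, if_neg hj, add_zero]
                exact ha
              · intro l hl
                rw [vu_apply_inl, if_neg (hl.trans hlt).ne', add_zero]
                exact (hmin l hl).1
              · intro l hl
                rw [vu_apply_inr, if_neg (lt_of_le_of_lt hl hlt).ne', Nat.sub_zero]
                exact heven l hl
            rw [Hmono_eq_of hc', L1 hlt.ne]
            exact addself _
      rw [Finset.sum_congr rfl (fun j _ => hterm j), Finset.sum_ite_eq' Finset.univ i₀]
      simp
    · -- the minimal index has an odd `v`-exponent
      have hzero' : ∀ j, j < i₀ → d (Sum.inl j) = 0 := fun j hj => (hmin j hj).1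
      have heven' : ∀ j, j < i₀ → Even (d (Sum.inr j)) := fun j hj => (hmin j hj).2
      have hH0 : Hmono d = 0 := Hmono_eq_zero (by
        intro i hi
        rcases lt_or_ge i i₀ with h | h
        · exact hi.1 (hzero' i h)
        · exact hS (hi.2.2 i₀ h))
      rw [hH0, map_zero, zero_add]
      have hterm : ∀ j : Fin n, (d (Sum.inr j) : ZMod 2) • Hmono (d - vE j + uE j) =
          if j = i₀ then monomial d 1 else 0 := by
        intro j
        by_cases hj : j = i₀
        · subst hj
          rw [if_pos rfl, castOdd hS, one_smul]
          have hb : d (Sum.inr j) ≠ 0 := fun h => hS (h ▸ Even.zero)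
          have hc' : hcond (d - vE j + uE j) j := by
            refine ⟨?_, ?_, ?_⟩
            · rw [vu_apply_inl, if_pos rfl]
              omega
            · intro l hl
              rw [vu_apply_inl, if_neg hl.ne', add_zero]
              exact hzero' l hl
            · intro l hl
              rcases eq_or_lt_of_le hl with rfl | h
              · rw [vu_apply_inr, if_pos rfl]
                rw [Nat.even_sub (by omega)]
                exact iff_of_false hS (by simp)
              · rw [vu_apply_inr, if_neg h.ne', Nat.sub_zero]
                exact heven' l h
          rw [Hmono_eq_of hc', L3 hb]
        · rw [if_neg hj]
          by_cases hE : Even (d (Sum.inr j))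
          · rw [castEven hE, zero_smul]
          · have hlt : i₀ < j :=
              lt_of_le_of_ne (hjmem j (Or.inr hE)) (Ne.symm hj)
            have hH : Hmono (d - vE j + uE j) = 0 := Hmono_eq_zero (by
              intro i hi
              rcases lt_or_ge i i₀ with h | h
              · refine hi.1 ?_
                rw [vu_apply_inl, if_neg (h.trans hlt).ne', add_zero]
                exact hzero' i h
              · refine hS ?_
                have h2 := hi.2.2 i₀ h
                rwa [vu_apply_inr, if_neg (fun hh => hj hh), Nat.sub_zero] at h2)
            rw [hH, smul_zero]
      rw [Finset.sum_congr rfl (fun j _ => hterm j), Finset.sum_ite_eq' Finset.univ i₀]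
      simp

lemma main_id (n : ℕ) (c : MvPolynomial (Fin n ⊕ Fin n) (ZMod 2)) :
    sDer n (Hmap n c) + Hmap n (sDer n c) + Pmap n c = c := by
  induction c using MvPolynomial.induction_on' with
  | monomial d r =>
    have hr : (monomial d r : MvPolynomial (Fin n ⊕ Fin n) (ZMod 2)) = r • monomial d 1 := by
      rw [smul_monomial, smul_eq_mul, mul_one]
    rw [hr, map_smul, Derivation.map_smul, Derivation.map_smul, map_smul, map_smul,
      ← smul_add, ← smul_add, key d]
  | add p q hp hq =>
    simp only [map_add]
    have hre : ∀ ap aq bp bq cp cq : MvPolynomial (Fin n ⊕ Fin n) (ZMod 2),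
        ap + aq + (bp + bq) + (cp + cq) = ap + bp + cp + (aq + bq + cq) := by
      intros; ring
    rw [hre, hp, hq]

lemma Pmap_mem (n : ℕ) (c : MvPolynomial (Fin n ⊕ Fin n) (ZMod 2)) :
    Pmap n c ∈ Asub n := by
  induction c using MvPolynomial.induction_on' with
  | monomial d r =>
    have hr : (monomial d r : MvPolynomial (Fin n ⊕ Fin n) (ZMod 2)) = r • monomial d 1 := by
      rw [smul_monomial, smul_eq_mul, mul_one]
    rw [hr, map_smul, Pmap_monomial, Asub]
    refine Subalgebra.smul_mem _ ?_ r
    rw [Pmono]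
    split_ifs with h
    · rw [← prod_X_pow_eq_monomial]
      refine Subalgebra.prod_mem _ fun x hx => ?_
      rcases x with x | x
      · exact absurd (h.1 x) (Finsupp.mem_support_iff.mp hx)
      · obtain ⟨k, hk⟩ := h.2 x
        have hxp : X (Sum.inr x) ^ d (Sum.inr x) =
            ((X (Sum.inr x) : MvPolynomial (Fin n ⊕ Fin n) (ZMod 2)) ^ 2) ^ k := by
          rw [← pow_mul]
          congr 1
          omega
        rw [hxp]
        exact pow_mem (Algebra.subset_adjoin (Set.mem_union_right _ (Set.mem_range_self x))) k
    · exact zero_mem _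
  | add p q hp hq =>
    rw [map_add]
    exact add_mem hp hq

lemma sDer_Asub (n : ℕ) {a : MvPolynomial (Fin n ⊕ Fin n) (ZMod 2)} (ha : a ∈ Asub n) :
    sDer n a = 0 := by
  have h : Set.EqOn (⇑(sDer n))
      (⇑(0 : Derivation (ZMod 2) (MvPolynomial (Fin n ⊕ Fin n) (ZMod 2))
          (MvPolynomial (Fin n ⊕ Fin n) (ZMod 2))))
      (Set.range (fun i : Fin n => X (Sum.inl i)) ∪
        Set.range (fun i : Fin n => (X (Sum.inr i) :
          MvPolynomial (Fin n ⊕ Fin n) (ZMod 2)) ^ 2)) := by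
    rintro x (⟨i, rfl⟩ | ⟨i, rfl⟩)
    · show sDer n (X (Sum.inl i)) = _
      rw [show sDer n = MvPolynomial.mkDerivation (ZMod 2)
          (Sum.elim (fun _ => 0) (fun i => X (Sum.inl i))) from rfl, mkDerivation_X]
      simp
    · show sDer n (X (Sum.inr i) ^ 2) = _
      rw [pow_two, Derivation.leibniz]
      simp only [smul_eq_mul]
      rw [addself]
      simp
  simpa using Derivation.eqOn_adjoin h ha

/-- `s ∘ s` as a derivation (possible since the characteristic is `2`). -/
def sDer2 (n : ℕ) :
    Derivation (ZMod 2) (MvPolynomial (Fin n ⊕ Fin n) (ZMod 2))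
      (MvPolynomial (Fin n ⊕ Fin n) (ZMod 2)) where
  toLinearMap := (sDer n).toLinearMap ∘ₗ (sDer n).toLinearMap
  map_one_eq_zero' := by simp
  leibniz' a b := by
    simp only [LinearMap.coe_comp, Function.comp_apply, Derivation.coeFn_coe, smul_eq_mul]
    rw [Derivation.leibniz, smul_eq_mul, smul_eq_mul, map_add, Derivation.leibniz,
      Derivation.leibniz, smul_eq_mul, smul_eq_mul, smul_eq_mul, smul_eq_mul]
    linear_combination (addself (sDer n a * sDer n b) : _)

lemma sder_sq (n : ℕ) (x : MvPolynomial (Fin n ⊕ Fin n) (ZMod 2)) :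
    sDer n (sDer n x) = 0 := by
  have h : sDer2 n = 0 := by
    apply MvPolynomial.derivation_ext
    intro i
    have : sDer2 n (X i) = sDer n (sDer n (X i)) := rfl
    rw [this]
    rcases i with i | i
    · rw [show sDer n (X (Sum.inl i)) = 0 by
        rw [show sDer n = MvPolynomial.mkDerivation (ZMod 2)
          (Sum.elim (fun _ => 0) (fun i => X (Sum.inl i))) from rfl, mkDerivation_X]; rfl]
      simp
    · rw [show sDer n (X (Sum.inr i)) = X (Sum.inl i) by
        rw [show sDer n = MvPolynomial.mkDerivation (ZMod 2)
          (Sum.elim (fun _ => 0) (fun i => X (Sum.inl i))) from rfl, mkDerivation_X]; rfl]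
      rw [show sDer n (X (Sum.inl i)) = 0 by
        rw [show sDer n = MvPolynomial.mkDerivation (ZMod 2)
          (Sum.elim (fun _ => 0) (fun i => X (Sum.inl i))) from rfl, mkDerivation_X]; rfl]
      rfl
  have h2 : sDer2 n x = 0 := by rw [h]; rfl
  exact h2

end

end Stmt3Aux

/-- `ker(s) = im(s) + A` inside `C`. -/
theorem stmt3 (n : ℕ) (c : MvPolynomial (Fin n ⊕ Fin n) (ZMod 2)) :
    sDer n c = 0 ↔ ∃ x : MvPolynomial (Fin n ⊕ Fin n) (ZMod 2),
      ∃ a ∈ Asub n, c = sDer n x + a := by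
  constructor
  · intro h
    refine ⟨Stmt3Aux.Hmap n c, Stmt3Aux.Pmap n c, Stmt3Aux.Pmap_mem n c, ?_⟩
    have hm := Stmt3Aux.main_id n c
    rw [h, map_zero, add_zero] at hm
    exact hm.symm
  · rintro ⟨x, a, ha, rfl⟩
    rw [map_add, Stmt3Aux.sder_sq, Stmt3Aux.sDer_Asub n ha, add_zero]
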